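/- The (min,+)-convolution of two length-n arrays of non-negative integers bounded by u, defined by c[i] = min_{0≤j≤i}(a[j] + b[i−j]), can be recovered from the classical convolution of the arrays a'[j] = (n+1)^{u − a[j]} and b'[j] = (n+1)^{u − b[j]}: specifically, c[i] = 2u − ⌊log_{n+1} c'[i]⌋ where c'[i] = Σ_{j=0}^{i} a'[j]·b'[i−j]. -/

import Mathlib

/-- `IsIC n k` : there is an arithmetic expression built from the constant 1
using additions and multiplications that evaluates to `n` and uses `k` ones. -/
inductive IsIC : ℕ → ℕ → Prop
  | one : IsIC 1 1
  | add {a b m k : ℕ} : IsIC a m → IsIC b k → IsIC (a + b) (m + k)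
  | mul {a b m k : ℕ} : IsIC a m → IsIC b k → IsIC (a * b) (m + k)

/-- The integer complexity of `n`: the minimum number of 1's needed. -/
noncomputable def intComplexity (n : ℕ) : ℕ := sInf {k | IsIC n k}

theorem minplus_conv_from_classical_conv (n u : ℕ) (hn : 0 < n) (a b : ℕ → ℕ)
    (ha : ∀ j < n, a j ≤ u) (hb : ∀ j < n, b j ≤ u) :
    ∀ i < 2 * n - 1,
      sInf {v | ∃ j, j ≤ i ∧ j < n ∧ i - j < n ∧ v = a j + b (i - j)} =
        2 * u - Nat.log (n + 1)
          (∑ j ∈ Finset.range (i + 1),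
            (if j < n then (n + 1) ^ (u - a j) else 0) *
            (if i - j < n then (n + 1) ^ (u - b (i - j)) else 0)) := by
  intro i hi
  set S : Set ℕ := {v | ∃ j, j ≤ i ∧ j < n ∧ i - j < n ∧ v = a j + b (i - j)} with hS
  have hj0 : (i - (n-1)) ≤ i ∧ (i - (n-1)) < n ∧ i - (i - (n-1)) < n := by omega
  have hne : S.Nonempty :=
    ⟨a (i-(n-1)) + b (i - (i-(n-1))), i-(n-1), hj0.1, hj0.2.1, hj0.2.2, rfl⟩
  obtain ⟨j1, hj1i, hj1n, hij1, hc⟩ := Nat.sInf_mem hne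
  set c := sInf S with hcdef
  have hcu : c ≤ 2 * u := by
    have := ha j1 hj1n; have := hb (i - j1) hij1; omega
  have hterm : ∀ j, j < n → i - j < n →
      (n+1)^(u - a j) * (n+1)^(u - b (i-j)) = (n+1)^(2*u - (a j + b (i-j))) := by
    intro j hjn hijn
    rw [← pow_add]
    congr 1
    have := ha j hjn; have := hb (i-j) hijn; omega
  set T := ∑ j ∈ Finset.range (i + 1),
      (if j < n then (n + 1) ^ (u - a j) else 0) *
      (if i - j < n then (n + 1) ^ (u - b (i - j)) else 0) with hT
  have hlow : (n+1)^(2*u - c) ≤ T := by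
    have hmem : j1 ∈ Finset.range (i+1) := Finset.mem_range.2 (by omega)
    calc (n+1)^(2*u - c)
        = (if j1 < n then (n + 1) ^ (u - a j1) else 0) *
          (if i - j1 < n then (n + 1) ^ (u - b (i - j1)) else 0) := by
          rw [if_pos hj1n, if_pos hij1, hterm j1 hj1n hij1, hc]
      _ ≤ T := by
          rw [hT]
          exact Finset.single_le_sum (f := fun j => (if j < n then (n + 1) ^ (u - a j) else 0) *
            (if i - j < n then (n + 1) ^ (u - b (i - j)) else 0)) (fun j _ => Nat.zero_le _) hmem
  have hup : T < (n+1)^(2*u - c + 1) := by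
    have hb1 : T ≤ ∑ j ∈ Finset.range (i+1), (if j < n then (n+1)^(2*u-c) else 0) := by
      apply Finset.sum_le_sum
      intro j hj
      have hji : j ≤ i := by have := Finset.mem_range.1 hj; omega
      by_cases h1 : j < n
      · by_cases h2 : i - j < n
        · simp only [if_pos h1, if_pos h2]
          rw [hterm j h1 h2]
          apply Nat.pow_le_pow_right (by omega)
          have hv : a j + b (i - j) ∈ S := ⟨j, hji, h1, h2, rfl⟩
          have := Nat.sInf_le hv
          omega
        · simp [h2]
      · simp [h1]
    have hcard : ((Finset.range (i+1)).filter (fun j => j < n)).card ≤ n := by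
      have hsub : (Finset.range (i+1)).filter (fun j => j < n) ⊆ Finset.range n := by
        intro x hx
        simp only [Finset.mem_filter, Finset.mem_range] at hx ⊢
        exact hx.2
      simpa using Finset.card_le_card hsub
    have hb2 : ∑ j ∈ Finset.range (i+1), (if j < n then (n+1)^(2*u-c) else 0)
        ≤ n * (n+1)^(2*u-c) := by
      rw [← Finset.sum_filter, Finset.sum_const, smul_eq_mul]
      exact Nat.mul_le_mul_right _ hcard
    have hlt : n * (n+1)^(2*u-c) < (n+1)^(2*u-c+1) := by
      rw [pow_succ]
      have hpos : 0 < (n+1)^(2*u-c) := Nat.pow_pos (by omega)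
      rw [Nat.mul_comm ((n+1)^(2*u-c)) (n+1)]
      exact mul_lt_mul_of_pos_right (by omega) hpos
    omega
  have hlog : Nat.log (n+1) T = 2*u - c := Nat.log_eq_of_pow_le_of_lt_pow hlow hup
  rw [hlog]
  omega
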